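/- Differential inequality argument: let f : [0, T) → (0, 1) be C¹, satisfying f'(t) ≤ −β tan(2t) log(f(t)) f(t) for all t ∈ [0, T) with T ≤ π/4 and β > 0. Then for all 0 ≤ s ≤ t < T, f(t) ≤ f(s)^{(cos(2t)/cos(2s))^{β/2}}. -/

import Mathlib

theorem stmt17 (T β : ℝ) (hT0 : 0 < T) (hT : T ≤ Real.pi/4) (hβ : 0 < β)
    (f f' : ℝ → ℝ)
    (hrange : ∀ t ∈ Set.Ico (0:ℝ) T, 0 < f t ∧ f t < 1)
    (hderiv : ∀ t ∈ Set.Ico (0:ℝ) T, HasDerivAt f (f' t) t)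
    (hcont : ContinuousOn f' (Set.Ico (0:ℝ) T))
    (hineq : ∀ t ∈ Set.Ico (0:ℝ) T, f' t ≤ -β * Real.tan (2*t) * Real.log (f t) * f t) :
    ∀ s t : ℝ, 0 ≤ s → s ≤ t → t < T →
      f t ≤ (f s) ^ ((Real.cos (2*t) / Real.cos (2*s)) ^ (β/2)) := by
  intro s t hs hst htT
  -- basic facts on Ico 0 T
  have hcos : ∀ x ∈ Set.Ico (0:ℝ) T, 0 < Real.cos (2*x) := by
    intro x hx
    apply Real.cos_pos_of_mem_Ioo
    constructor
    · nlinarith [Real.pi_pos, hx.1]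
    · have := hx.2
      nlinarith [Real.pi_pos]
  have hlogneg : ∀ x ∈ Set.Ico (0:ℝ) T, Real.log (f x) < 0 := by
    intro x hx
    exact Real.log_neg (hrange x hx).1 (hrange x hx).2
  have hsT : s < T := lt_of_le_of_lt hst htT
  have hsmem : s ∈ Set.Ico (0:ℝ) T := ⟨hs, hsT⟩
  have htmem : t ∈ Set.Ico (0:ℝ) T := ⟨le_trans hs hst, htT⟩
  -- define h
  set h : ℝ → ℝ := fun x => Real.log (-Real.log (f x)) - (β/2) * Real.log (Real.cos (2*x)) with hh
  have hderivh : ∀ x ∈ Set.Ico (0:ℝ) T,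
      HasDerivAt h (f' x / (f x * Real.log (f x)) + β * Real.tan (2*x)) x := by
    intro x hx
    have hfx := (hrange x hx).1
    have hlx := hlogneg x hx
    have hcx := hcos x hx
    have d1 : HasDerivAt (fun y => Real.log (f y)) (f' x / f x) x :=
      (hderiv x hx).log hfx.ne'
    have d2 : HasDerivAt (fun y => -Real.log (f y)) (-(f' x / f x)) x := d1.neg
    have d3 : HasDerivAt (fun y => Real.log (-Real.log (f y)))
        (-(f' x / f x) / (-Real.log (f x))) x := by
      apply d2.log
      simpa using hlx.ne
    have d4 : HasDerivAt (fun y : ℝ => 2*y) 2 x := by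
      simpa using (hasDerivAt_id x).const_mul (2:ℝ)
    have d5 : HasDerivAt (fun y : ℝ => Real.cos (2*y)) (-Real.sin (2*x) * 2) x := d4.cos
    have d6 : HasDerivAt (fun y : ℝ => Real.log (Real.cos (2*y)))
        ((-Real.sin (2*x) * 2) / Real.cos (2*x)) x := d5.log hcx.ne'
    have d7 := d3.sub (d6.const_mul (β/2))
    convert d7 using 1
    case e'_4 => rfl
    case e'_5 => rfl
    case e'_8 => rfl
    rw [Real.tan_eq_sin_div_cos]
    field_simp
    ring
  -- derivative nonneg
  have hnn : ∀ x ∈ Set.Ico (0:ℝ) T,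
      0 ≤ f' x / (f x * Real.log (f x)) + β * Real.tan (2*x) := by
    intro x hx
    have hfx := (hrange x hx).1
    have hlx := hlogneg x hx
    have hd : f x * Real.log (f x) < 0 := mul_neg_of_pos_of_neg hfx hlx
    have h1 := hineq x hx
    have key : -β * Real.tan (2*x) ≤ f' x / (f x * Real.log (f x)) := by
      rw [le_div_iff_of_neg hd]
      calc f' x ≤ -β * Real.tan (2*x) * Real.log (f x) * f x := h1
        _ = -β * Real.tan (2*x) * (f x * Real.log (f x)) := by ring
    linarith
  -- monotonicity of h on Icc s t
  have hsub : Set.Icc s t ⊆ Set.Ico (0:ℝ) T := fun x hx => ⟨le_trans hs hx.1, lt_of_le_of_lt hx.2 htT⟩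
  have hsub2 : Set.Ioo s t ⊆ Set.Ico (0:ℝ) T := fun x hx => hsub ⟨le_of_lt hx.1, le_of_lt hx.2⟩
  have hmono : MonotoneOn h (Set.Icc s t) := by
    apply monotoneOn_of_deriv_nonneg (convex_Icc s t)
    · exact fun x hx => (hderivh x (hsub hx)).continuousAt.continuousWithinAt
    · rw [interior_Icc]
      exact fun x hx => (hderivh x (hsub2 hx)).differentiableAt.differentiableWithinAt
    · rw [interior_Icc]
      intro x hx
      rw [(hderivh x (hsub2 hx)).deriv]
      exact hnn x (hsub2 hx)
  have hht : h s ≤ h t :=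
    hmono (Set.left_mem_Icc.2 hst) (Set.right_mem_Icc.2 hst) hst
  -- unfold and conclude
  have hfs := hrange s hsmem
  have hft := hrange t htmem
  have hls := hlogneg s hsmem
  have hlt := hlogneg t htmem
  have hcs := hcos s hsmem
  have hct := hcos t htmem
  set r : ℝ := (Real.cos (2*t) / Real.cos (2*s)) ^ (β/2) with hr
  have hrpos : 0 < r := Real.rpow_pos_of_pos (div_pos hct hcs) _
  -- from hht : log(-log f s) - (β/2) log cos 2s ≤ log(-log f t) - (β/2) log cos 2t
  have key : (-Real.log (f s)) * r ≤ -Real.log (f t) := by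
    have hlogr : Real.log r = (β/2) * (Real.log (Real.cos (2*t)) - Real.log (Real.cos (2*s))) := by
      rw [hr, Real.log_rpow (div_pos hct hcs), Real.log_div hct.ne' hcs.ne']
    have h2 : Real.log ((-Real.log (f s)) * r) ≤ Real.log (-Real.log (f t)) := by
      rw [Real.log_mul (by linarith : (-Real.log (f s)) ≠ 0) hrpos.ne', hlogr]
      have := hht
      simp only [hh] at this
      linarith
    have := Real.exp_le_exp.2 h2
    rwa [Real.exp_log (mul_pos (by linarith) hrpos),
      Real.exp_log (by linarith : (0:ℝ) < -Real.log (f t))] at this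
  have hlog : Real.log (f t) ≤ Real.log (f s) * r := by nlinarith
  calc f t = Real.exp (Real.log (f t)) := (Real.exp_log hft.1).symm
    _ ≤ Real.exp (Real.log (f s) * r) := Real.exp_le_exp.2 hlog
    _ = f s ^ r := (Real.rpow_def_of_pos hfs.1 r).symm
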